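/- Let σ > 0 and let (X₁, X₂) be a random vector in ℝ² on a probability space with E[|X₁|] < ∞. Suppose that for every continuously differentiable function f : ℝ² → ℝ which is bounded and has bounded partial derivatives one has E[σ² · ∂₁f(X₁, X₂) − X₁ · f(X₁, X₂)] = 0. Then X₁ has the centered Gaussian law N(0,σ²) and X₁ is independent of X₂. -/

import Mathlib

open MeasureTheory ProbabilityTheory

/-- Partial derivative of `f : ℝ × ℝ → ℝ` in its first variable. -/
noncomputable def pderiv1 (f : ℝ × ℝ → ℝ) (p : ℝ × ℝ) : ℝ :=
  deriv (fun y => f (y, p.2)) p.1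

/-- Partial derivative of `f : ℝ × ℝ → ℝ` in its second variable. -/
noncomputable def pderiv2 (f : ℝ × ℝ → ℝ) (p : ℝ × ℝ) : ℝ :=
  deriv (fun y => f (p.1, y)) p.2

open MeasureTheory Real Set Filter
open scoped Topology

namespace SteinAux

/-- Gaussian-type density (unnormalized). -/
noncomputable def d (σ : ℝ) (u : ℝ) : ℝ := rexp (-u ^ 2 / (2 * σ ^ 2))

lemma d_pos (σ u : ℝ) : 0 < d σ u := exp_pos _

lemma d_cont (σ : ℝ) : Continuous (d σ) := by
  unfold d; fun_prop

lemma d_fun_eq (σ : ℝ) : d σ = fun u => rexp (-((2 * σ ^ 2)⁻¹) * u ^ 2) := by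
  funext u; unfold d; ring_nf

lemma d_integrable {σ : ℝ} (hσ : 0 < σ) : Integrable (d σ) := by
  have h : (0:ℝ) < (2 * σ ^ 2)⁻¹ := by positivity
  rw [d_fun_eq]
  exact integrable_exp_neg_mul_sq h

lemma d_integral {σ : ℝ} (hσ : 0 < σ) : ∫ u, d σ u = Real.sqrt (2 * π * σ ^ 2) := by
  rw [d_fun_eq]
  rw [integral_gaussian]
  congr 1
  rw [div_eq_iff (by positivity)]
  field_simp

lemma d_integral_pos {σ : ℝ} (hσ : 0 < σ) : 0 < ∫ u, d σ u := by
  rw [d_integral hσ]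
  have : (0:ℝ) < 2 * π * σ ^ 2 := by positivity
  exact Real.sqrt_pos.2 this

lemma d_even (σ u : ℝ) : d σ (-u) = d σ u := by simp [d]

lemma integrableOn_Iic_comp_mul_left {f : ℝ → ℝ} {c b : ℝ} (hb : 0 < b)
    (hf : IntegrableOn f (Iic (b * c))) : IntegrableOn (fun x => f (b * x)) (Iic c) := by
  have A : MeasurableEmbedding (fun x : ℝ => b * x) :=
    (Homeomorph.mulLeft₀ b hb.ne').isClosedEmbedding.measurableEmbedding
  have hpre : (fun x : ℝ => b * x) ⁻¹' (Iic (b * c)) = Iic c := by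
    ext x; simp [mul_le_mul_iff_right₀ hb]
  have hmap : Measure.map (fun x : ℝ => b * x) (volume.restrict (Iic c))
      = (ENNReal.ofReal |b⁻¹| • volume).restrict (Iic (b * c)) := by
    rw [← hpre, ← Measure.restrict_map A.measurable measurableSet_Iic,
      Real.map_volume_mul_left hb.ne']
  have : Integrable f (Measure.map (fun x : ℝ => b * x) (volume.restrict (Iic c))) := by
    rw [hmap, Measure.restrict_smul]
    exact hf.smul_measure ENNReal.ofReal_ne_top
  exact A.integrable_map_iff.mp this

lemma integrableOn_exp_mul_Iic {b : ℝ} (hb : 0 < b) (a : ℝ) :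
    IntegrableOn (fun u => rexp (b * u)) (Iic a) :=
  integrableOn_Iic_comp_mul_left hb (integrableOn_exp_Iic (b * a))

lemma integral_exp_mul_Iic {b : ℝ} (hb : 0 < b) (a : ℝ) :
    ∫ u in Iic a, rexp (b * u) = rexp (b * a) / b := by
  have h1 : ∫ u in Iic a, rexp (b * u) = ∫ x in Ioi (-a), rexp (-(b * x)) := by
    rw [← integral_comp_neg_Iic]
    congr 1 with x
    ring_nf
  rw [h1]
  have h2 := integral_comp_mul_left_Ioi (fun x => rexp (-x)) (-a) hb
  rw [h2, smul_eq_mul, integral_exp_neg_Ioi]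
  rw [div_eq_inv_mul]
  ring_nf

/-- Tail bound for the Gaussian density on the left. -/
lemma tail_Iic {σ : ℝ} (hσ : 0 < σ) {c : ℝ} (hc : 0 < c) :
    ∫ u in Iic (-c), d σ u ≤ d σ c * (σ ^ 2 / c) := by
  have hσ2 : (0:ℝ) < σ ^ 2 := by positivity
  have hb : (0:ℝ) < c / σ ^ 2 := by positivity
  have hpt : ∀ u ∈ Iic (-c), d σ u ≤ d σ c * rexp (c / σ ^ 2 * (u + c)) := by
    intro u _
    unfold d
    rw [← Real.exp_add, Real.exp_le_exp]
    have key : -(c:ℝ) ^ 2 / (2 * σ ^ 2) + c / σ ^ 2 * (u + c) - -u ^ 2 / (2 * σ ^ 2)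
        = (u + c) ^ 2 / (2 * σ ^ 2) := by
      field_simp
      ring
    nlinarith [sq_nonneg (u + c), div_nonneg (sq_nonneg (u + c)) (le_of_lt (by positivity : (0:ℝ) < 2 * σ ^ 2))]
  have hint1 : IntegrableOn (d σ) (Iic (-c)) := (d_integrable hσ).integrableOn
  have hint2 : IntegrableOn (fun u => d σ c * rexp (c / σ ^ 2 * (u + c))) (Iic (-c)) := by
    have : IntegrableOn (fun u => rexp (c / σ ^ 2 * u)) (Iic (-c)) :=
      integrableOn_exp_mul_Iic hb _
    have h2 : IntegrableOn (fun u => d σ c * (rexp (c / σ ^ 2 * u) * rexp (c / σ ^ 2 * c))) (Iic (-c)) :=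
      ((this.mul_const _).const_mul _)
    refine h2.congr_fun (fun u _ => ?_) measurableSet_Iic
    beta_reduce
    rw [← Real.exp_add]
    ring_nf
  have hle := setIntegral_mono_on hint1 hint2 measurableSet_Iic hpt
  refine hle.trans ?_
  have : ∫ u in Iic (-c), d σ c * rexp (c / σ ^ 2 * (u + c))
      = d σ c * (rexp (c / σ ^ 2 * c) * ∫ u in Iic (-c), rexp (c / σ ^ 2 * u)) := by
    rw [← integral_const_mul, ← integral_const_mul]
    congr 1 with u
    rw [← Real.exp_add]
    ring_nf
  rw [this, integral_exp_mul_Iic hb]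
  apply le_of_eq
  congr 1
  rw [← mul_div_assoc, ← Real.exp_add]
  have h4 : c / σ ^ 2 * c + c / σ ^ 2 * -c = 0 := by ring
  rw [h4, Real.exp_zero, one_div, inv_div]

/-- Tail bound on the right. -/
lemma tail_Ici {σ : ℝ} (hσ : 0 < σ) {c : ℝ} (hc : 0 < c) :
    ∫ u in Ici c, d σ u ≤ d σ c * (σ ^ 2 / c) := by
  have h : ∫ u in Ici c, d σ u = ∫ u in Iic (-c), d σ u := by
    rw [integral_Ici_eq_integral_Ioi, ← neg_neg c, ← integral_comp_neg_Iic]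
    simp_rw [d_even, neg_neg]
  rw [h]
  exact tail_Iic hσ hc

lemma setIntegral_d_le {σ : ℝ} (hσ : 0 < σ) (s : Set ℝ) :
    ∫ u in s, d σ u ≤ ∫ u, d σ u :=
  setIntegral_le_integral (d_integrable hσ) (Eventually.of_forall fun u => (d_pos σ u).le)

lemma setIntegral_d_nonneg (σ : ℝ) {s : Set ℝ} (hs : MeasurableSet s) : 0 ≤ ∫ u in s, d σ u :=
  setIntegral_nonneg hs fun u _ => (d_pos σ u).le



/-! ### The solution of the Stein equation -/

section Sol

variable (σ : ℝ) (φ : ℝ → ℝ)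

/-- the Gaussian mean of `φ` (w.r.t. the unnormalized density). -/
noncomputable def m : ℝ := (∫ u, d σ u * φ u) / (∫ u, d σ u)

/-- integrand. -/
noncomputable def ψ : ℝ → ℝ := fun u => d σ u * (φ u - m σ φ)

/-- antiderivative. -/
noncomputable def F : ℝ → ℝ := fun x => ∫ u in Iic x, ψ σ φ u

/-- the solution of the Stein equation. -/
noncomputable def sol : ℝ → ℝ := fun x => rexp (x ^ 2 / (2 * σ ^ 2)) * F σ φ x / σ ^ 2

variable {σ φ} {Cφ : ℝ}

lemma exp_mul_d (x : ℝ) : rexp (x ^ 2 / (2 * σ ^ 2)) * d σ x = 1 := by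
  rw [d, ← Real.exp_add]
  rw [show x ^ 2 / (2 * σ ^ 2) + -x ^ 2 / (2 * σ ^ 2) = 0 by ring, Real.exp_zero]

section Cont
variable (hσ : 0 < σ) (hφc : Continuous φ) (hφb : ∀ x, |φ x| ≤ Cφ)
include hσ hφc hφb

lemma dφ_integrable : Integrable (fun u => d σ u * φ u) := by
  refine (d_integrable hσ).const_mul Cφ |>.mono' ?_ ?_
  · exact ((d_cont σ).mul hφc).aestronglyMeasurable
  · refine Eventually.of_forall fun u => ?_
    rw [Real.norm_eq_abs, abs_mul, abs_of_pos (d_pos σ u), mul_comm Cφ]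
    exact mul_le_mul_of_nonneg_left (hφb u) (d_pos σ u).le

lemma ψ_integrable : Integrable (ψ σ φ) := by
  refine (d_integrable hσ).const_mul (Cφ + |m σ φ|) |>.mono' ?_ ?_
  · exact ((d_cont σ).mul (hφc.sub continuous_const)).aestronglyMeasurable
  · refine Eventually.of_forall fun u => ?_
    rw [Real.norm_eq_abs, ψ, abs_mul, abs_of_pos (d_pos σ u), mul_comm _ (d σ u)]
    refine mul_le_mul_of_nonneg_left ((abs_sub _ _).trans ?_) (d_pos σ u).le
    exact add_le_add_left (hφb u) _

lemma ψ_total : ∫ u, ψ σ φ u = 0 := by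
  have h1 : Integrable (fun u => d σ u * φ u) := dφ_integrable hσ hφc hφb
  have h2 : Integrable (fun u => d σ u * m σ φ) := (d_integrable hσ).mul_const _
  have : ∫ u, ψ σ φ u = (∫ u, d σ u * φ u) - (∫ u, d σ u) * m σ φ := by
    rw [← integral_mul_const]
    rw [show (fun u => ψ σ φ u) = fun u => d σ u * φ u - d σ u * m σ φ by
      funext u; rw [ψ]; ring]
    exact integral_sub h1 h2
  rw [this, m, mul_div_cancel₀ _ (d_integral_pos hσ).ne']
  ring

lemma F_bound_left (x : ℝ) : |F σ φ x| ≤ (Cφ + |m σ φ|) * ∫ u in Iic x, d σ u := by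
  rw [F]
  refine le_trans (by simpa [Real.norm_eq_abs] using
    norm_integral_le_integral_norm (f := ψ σ φ) (μ := volume.restrict (Iic x))) ?_
  rw [← integral_const_mul]
  refine setIntegral_mono_on ((ψ_integrable hσ hφc hφb).integrableOn.abs)
    (((d_integrable hσ).const_mul _).integrableOn) measurableSet_Iic fun u _ => ?_
  rw [ψ, abs_mul, abs_of_pos (d_pos σ u), mul_comm (Cφ + |m σ φ|) (d σ u)]
  refine mul_le_mul_of_nonneg_left ((abs_sub _ _).trans ?_) (d_pos σ u).le
  exact add_le_add_left (hφb u) _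

lemma F_eq_neg_Ioi (x : ℝ) : F σ φ x = - ∫ u in Ioi x, ψ σ φ u := by
  have h := intervalIntegral.integral_Iic_add_Ioi (b := x) (ψ_integrable hσ hφc hφb).integrableOn
    (ψ_integrable hσ hφc hφb).integrableOn
  rw [ψ_total hσ hφc hφb] at h
  rw [F]
  linarith

lemma F_bound_right (x : ℝ) : |F σ φ x| ≤ (Cφ + |m σ φ|) * ∫ u in Ici x, d σ u := by
  rw [F_eq_neg_Ioi hσ hφc hφb, abs_neg, ← integral_Ici_eq_integral_Ioi]
  refine le_trans (by simpa [Real.norm_eq_abs] using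
    norm_integral_le_integral_norm (f := ψ σ φ) (μ := volume.restrict (Ici x))) ?_
  rw [← integral_const_mul]
  have h1 : IntegrableOn (fun u => |ψ σ φ u|) (Ici x) := (ψ_integrable hσ hφc hφb).integrableOn.abs
  refine setIntegral_mono_on h1 (((d_integrable hσ).const_mul _).integrableOn)
    measurableSet_Ici fun u _ => ?_
  rw [ψ, abs_mul, abs_of_pos (d_pos σ u), mul_comm (Cφ + |m σ φ|) (d σ u)]
  refine mul_le_mul_of_nonneg_left ((abs_sub _ _).trans ?_) (d_pos σ u).le
  exact add_le_add_left (hφb u) _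

lemma ψ_cont : Continuous (ψ σ φ) := (d_cont σ).mul (hφc.sub continuous_const)

lemma hasDerivAt_F (x : ℝ) : HasDerivAt (F σ φ) (ψ σ φ x) x := by
  have hcont : Continuous (ψ σ φ) := (d_cont σ).mul (hφc.sub continuous_const)
  have hψint : Integrable (ψ σ φ) := ψ_integrable hσ hφc hφb
  have heq : F σ φ = fun y => F σ φ 0 + ∫ t in (0:ℝ)..y, ψ σ φ t := by
    funext y
    show (∫ u in Iic y, ψ σ φ u) = (∫ u in Iic 0, ψ σ φ u) + ∫ t in (0:ℝ)..y, ψ σ φ t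
    rw [← intervalIntegral.integral_Iic_sub_Iic hψint.integrableOn hψint.integrableOn]
    ring
  rw [heq]
  exact (intervalIntegral.integral_hasDerivAt_right (hcont.intervalIntegrable 0 x)
    (hcont.stronglyMeasurableAtFilter volume (𝓝 x)) hcont.continuousAt).const_add (F σ φ 0)

lemma hasDerivAt_sol (x : ℝ) :
    HasDerivAt (sol σ φ) (x / σ ^ 2 * sol σ φ x + (φ x - m σ φ) / σ ^ 2) x := by
  have hE : HasDerivAt (fun y : ℝ => rexp (y ^ 2 / (2 * σ ^ 2)))
      (rexp (x ^ 2 / (2 * σ ^ 2)) * (2 * x / (2 * σ ^ 2))) x := by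
    have h1 : HasDerivAt (fun y : ℝ => y ^ 2 / (2 * σ ^ 2)) (2 * x / (2 * σ ^ 2)) x := by
      simpa using (hasDerivAt_pow 2 x).div_const (2 * σ ^ 2)
    exact h1.exp
  have hF := hasDerivAt_F hσ hφc hφb x
  have h := (hE.mul hF).div_const (σ ^ 2)
  have key : x / σ ^ 2 * sol σ φ x + (φ x - m σ φ) / σ ^ 2
      = (rexp (x ^ 2 / (2 * σ ^ 2)) * (2 * x / (2 * σ ^ 2)) * F σ φ x
         + rexp (x ^ 2 / (2 * σ ^ 2)) * ψ σ φ x) / σ ^ 2 := by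
    have hEd := exp_mul_d (σ := σ) x
    have h2 : rexp (x ^ 2 / (2 * σ ^ 2)) * ψ σ φ x = φ x - m σ φ := by
      rw [ψ, ← mul_assoc, hEd, one_mul]
    rw [h2, add_div, sol]
    congr 1
    have hne : σ ^ 2 ≠ 0 := by positivity
    field_simp
  rw [key]
  exact h

lemma deriv_sol (x : ℝ) :
    deriv (sol σ φ) x = x / σ ^ 2 * sol σ φ x + (φ x - m σ φ) / σ ^ 2 :=
  (hasDerivAt_sol hσ hφc hφb x).deriv

lemma sol_contDiff : ContDiff ℝ 1 (sol σ φ) := by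
  rw [contDiff_one_iff_deriv]
  have hdiff : Differentiable ℝ (sol σ φ) :=
    fun x => (hasDerivAt_sol hσ hφc hφb x).differentiableAt
  refine ⟨hdiff, ?_⟩
  have h : deriv (sol σ φ) = fun x => x / σ ^ 2 * sol σ φ x + (φ x - m σ φ) / σ ^ 2 := by
    funext x; exact deriv_sol hσ hφc hφb x
  rw [h]
  exact ((continuous_id.div_const _).mul hdiff.continuous).add
    ((hφc.sub continuous_const).div_const _)

lemma stein_identity (x : ℝ) :
    σ ^ 2 * deriv (sol σ φ) x - x * sol σ φ x = φ x - m σ φ := by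
  rw [deriv_sol hσ hφc hφb x]
  have hne : σ ^ 2 ≠ 0 := by positivity
  field_simp
  ring

end Cont

/-- Uniform bound constant. -/
noncomputable def B (σ : ℝ) : ℝ := max 1 (rexp ((2 * σ ^ 2)⁻¹) * (∫ u, d σ u) / σ ^ 2)

section Bounds
variable (hσ : 0 < σ) (hφc : Continuous φ) (hφb : ∀ x, |φ x| ≤ Cφ)
include hσ hφc hφb

lemma sol_abs_eq (x : ℝ) :
    |sol σ φ x| = rexp (x ^ 2 / (2 * σ ^ 2)) * |F σ φ x| / σ ^ 2 := by
  rw [sol, abs_div, abs_mul, abs_of_pos (exp_pos _), abs_of_pos (pow_pos hσ 2)]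

lemma sol_bounds (x : ℝ) :
    |sol σ φ x| ≤ (Cφ + |m σ φ|) * B σ ∧ |x * sol σ φ x| ≤ (Cφ + |m σ φ|) * B σ := by
  set C' := Cφ + |m σ φ| with hC'def
  have hC' : 0 ≤ C' := add_nonneg ((abs_nonneg _).trans (hφb 0)) (abs_nonneg _)
  have hB1 : 1 ≤ B σ := le_max_left _ _
  have hI : 0 < ∫ u, d σ u := d_integral_pos hσ
  have hσ2 : (0:ℝ) < σ ^ 2 := pow_pos hσ 2
  rcases le_or_gt |x| 1 with hx | hx
  · -- central case
    have hE : rexp (x ^ 2 / (2 * σ ^ 2)) ≤ rexp ((2 * σ ^ 2)⁻¹) := by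
      rw [Real.exp_le_exp]
      have h1 : x ^ 2 ≤ 1 := by rw [← sq_abs]; exact pow_le_one₀ (abs_nonneg x) hx
      rw [div_eq_mul_inv]
      nlinarith [inv_pos.2 (by positivity : (0:ℝ) < 2 * σ ^ 2)]
    have hF : |F σ φ x| ≤ C' * ∫ u, d σ u :=
      (F_bound_left hσ hφc hφb x).trans
        (mul_le_mul_of_nonneg_left (setIntegral_d_le hσ _) hC')
    have hsol : |sol σ φ x| ≤ C' * B σ := by
      rw [sol_abs_eq hσ hφc hφb]
      have : rexp (x ^ 2 / (2 * σ ^ 2)) * |F σ φ x| / σ ^ 2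
          ≤ rexp ((2 * σ ^ 2)⁻¹) * (C' * ∫ u, d σ u) / σ ^ 2 := by
        gcongr
      refine this.trans ?_
      have heq : rexp ((2 * σ ^ 2)⁻¹) * (C' * ∫ u, d σ u) / σ ^ 2
          = C' * (rexp ((2 * σ ^ 2)⁻¹) * (∫ u, d σ u) / σ ^ 2) := by ring
      rw [heq]
      exact mul_le_mul_of_nonneg_left (le_max_right _ _) hC'
    refine ⟨hsol, ?_⟩
    rw [abs_mul]
    calc |x| * |sol σ φ x| ≤ 1 * (C' * B σ) :=
          mul_le_mul hx hsol (abs_nonneg _) one_pos.le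
      _ = C' * B σ := one_mul _
  · -- tail case
    have key : |sol σ φ x| ≤ C' / |x| := by
      rcases lt_or_ge x 0 with hneg | hpos
      · have hc : (0:ℝ) < -x := by linarith
        have habs : |x| = -x := abs_of_neg hneg
        have hF : |F σ φ x| ≤ C' * (d σ (-x) * (σ ^ 2 / -x)) := by
          refine (F_bound_left hσ hφc hφb x).trans (mul_le_mul_of_nonneg_left ?_ hC')
          have := tail_Iic hσ hc
          rwa [neg_neg] at this
        rw [sol_abs_eq hσ hφc hφb, habs]
        have h2 : rexp (x ^ 2 / (2 * σ ^ 2)) * |F σ φ x| / σ ^ 2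
            ≤ rexp (x ^ 2 / (2 * σ ^ 2)) * (C' * (d σ (-x) * (σ ^ 2 / -x))) / σ ^ 2 := by
          gcongr
        refine h2.trans (le_of_eq ?_)
        rw [d_even]
        have hEd := exp_mul_d (σ := σ) x
        have hx0 : x ≠ 0 := hneg.ne
        have : rexp (x ^ 2 / (2 * σ ^ 2)) * (C' * (d σ x * (σ ^ 2 / -x))) / σ ^ 2
            = (rexp (x ^ 2 / (2 * σ ^ 2)) * d σ x) * (C' / -x) := by
          field_simp
        rw [this, hEd, one_mul]
      · have hc : (0:ℝ) < x := by rw [abs_of_nonneg hpos] at hx; linarith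
        have habs : |x| = x := abs_of_pos hc
        have hF : |F σ φ x| ≤ C' * (d σ x * (σ ^ 2 / x)) := by
          refine (F_bound_right hσ hφc hφb x).trans (mul_le_mul_of_nonneg_left ?_ hC')
          exact tail_Ici hσ hc
        rw [sol_abs_eq hσ hφc hφb, habs]
        have h2 : rexp (x ^ 2 / (2 * σ ^ 2)) * |F σ φ x| / σ ^ 2
            ≤ rexp (x ^ 2 / (2 * σ ^ 2)) * (C' * (d σ x * (σ ^ 2 / x))) / σ ^ 2 := by
          gcongr
        refine h2.trans (le_of_eq ?_)
        have hEd := exp_mul_d (σ := σ) x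
        have hx0 : x ≠ 0 := hc.ne'
        have : rexp (x ^ 2 / (2 * σ ^ 2)) * (C' * (d σ x * (σ ^ 2 / x))) / σ ^ 2
            = (rexp (x ^ 2 / (2 * σ ^ 2)) * d σ x) * (C' / x) := by
          field_simp
        rw [this, hEd, one_mul]
    have hxpos : (0:ℝ) < |x| := lt_trans one_pos hx
    constructor
    · refine key.trans ?_
      calc C' / |x| ≤ C' / 1 := by gcongr
        _ = C' := div_one _
        _ ≤ C' * B σ := le_mul_of_one_le_right hC' hB1
    · rw [abs_mul]
      calc |x| * |sol σ φ x| ≤ |x| * (C' / |x|) :=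
            mul_le_mul_of_nonneg_left key (abs_nonneg _)
        _ = C' := by field_simp
        _ ≤ C' * B σ := le_mul_of_one_le_right hC' hB1

lemma deriv_sol_bound (x : ℝ) :
    |deriv (sol σ φ) x| ≤ ((Cφ + |m σ φ|) * B σ + (Cφ + |m σ φ|)) / σ ^ 2 := by
  rw [deriv_sol hσ hφc hφb x]
  have h1 : x / σ ^ 2 * sol σ φ x + (φ x - m σ φ) / σ ^ 2
      = (x * sol σ φ x + (φ x - m σ φ)) / σ ^ 2 := by ring
  rw [h1, abs_div, abs_of_pos (pow_pos hσ 2)]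
  gcongr
  refine (abs_add_le _ _).trans (add_le_add ((sol_bounds hσ hφc hφb x).2) ?_)
  exact (abs_sub _ _).trans (add_le_add_left (hφb x) _)

end Bounds

end Sol

/-! ### The key identity -/

section Key

variable {Ω : Type*} [MeasurableSpace Ω] {P : Measure Ω} [IsProbabilityMeasure P]
  {σ : ℝ} {X₁ X₂ : Ω → ℝ}

lemma bounded_integrable {g : Ω → ℝ} (hg : Measurable g) {C : ℝ} (hb : ∀ ω, |g ω| ≤ C) :
    Integrable g P := by
  refine (integrable_const C).mono' hg.aestronglyMeasurable ?_
  exact Eventually.of_forall fun ω => by simpa [Real.norm_eq_abs] using hb ω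

lemma key_identity (hσ : 0 < σ) (hX₁ : Measurable X₁) (hX₂ : Measurable X₂)
    (hstein : ∀ f : ℝ × ℝ → ℝ, ContDiff ℝ 1 f →
      (∃ C, ∀ p, |f p| ≤ C) → (∃ C, ∀ p, |pderiv1 f p| ≤ C) →
      (∃ C, ∀ p, |pderiv2 f p| ≤ C) →
      ∫ ω, (σ ^ 2 * pderiv1 f (X₁ ω, X₂ ω) - X₁ ω * f (X₁ ω, X₂ ω)) ∂P = 0)
    {φ h : ℝ → ℝ} {Cφ Ch Ch' : ℝ}
    (hφc : Continuous φ) (hφb : ∀ x, |φ x| ≤ Cφ)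
    (hh : ContDiff ℝ 1 h) (hhb : ∀ x, |h x| ≤ Ch) (hhb' : ∀ x, |deriv h x| ≤ Ch') :
    ∫ ω, φ (X₁ ω) * h (X₂ ω) ∂P = m σ φ * ∫ ω, h (X₂ ω) ∂P := by
  set g := sol σ φ with hg
  have hgdiff : ∀ x, DifferentiableAt ℝ g x :=
    fun x => (hasDerivAt_sol hσ hφc hφb x).differentiableAt
  have hhdiff : Differentiable ℝ h := hh.differentiable one_ne_zero
  set f2 : ℝ × ℝ → ℝ := fun p => g p.1 * h p.2 with hf2
  have hcd : ContDiff ℝ 1 f2 :=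
    ((sol_contDiff hσ hφc hφb).comp contDiff_fst).mul (hh.comp contDiff_snd)
  have hp1 : ∀ p, pderiv1 f2 p = deriv g p.1 * h p.2 := by
    intro p
    unfold pderiv1
    show deriv (fun y => g y * h p.2) p.1 = _
    exact deriv_mul_const (hgdiff p.1) _
  have hp2 : ∀ p, pderiv2 f2 p = g p.1 * deriv h p.2 := by
    intro p
    unfold pderiv2
    show deriv (fun y => g p.1 * h y) p.2 = _
    exact deriv_const_mul _ (hhdiff p.2)
  set C' := Cφ + |m σ φ| with hC'
  have hCh : 0 ≤ Ch := (abs_nonneg _).trans (hhb 0)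
  have hb1 : ∀ p, |f2 p| ≤ C' * B σ * Ch := by
    intro p
    rw [hf2, abs_mul]
    exact mul_le_mul (sol_bounds hσ hφc hφb p.1).1 (hhb p.2) (abs_nonneg _)
      (mul_nonneg (add_nonneg ((abs_nonneg _).trans (hφb 0)) (abs_nonneg _))
        (le_trans zero_le_one (le_max_left _ _)))
  have hb2 : ∀ p, |pderiv1 f2 p| ≤ (C' * B σ + C') / σ ^ 2 * Ch := by
    intro p
    rw [hp1, abs_mul]
    exact mul_le_mul (deriv_sol_bound hσ hφc hφb p.1) (hhb p.2) (abs_nonneg _)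
      (le_trans (abs_nonneg _) (deriv_sol_bound hσ hφc hφb 0))
  have hb3 : ∀ p, |pderiv2 f2 p| ≤ C' * B σ * Ch' := by
    intro p
    rw [hp2, abs_mul]
    exact mul_le_mul (sol_bounds hσ hφc hφb p.1).1 (hhb' p.2) (abs_nonneg _)
      (le_trans (abs_nonneg _) ((sol_bounds hσ hφc hφb 0).1))
  have h0 := hstein f2 hcd ⟨_, hb1⟩ ⟨_, hb2⟩ ⟨_, hb3⟩
  have heq : ∀ ω, σ ^ 2 * pderiv1 f2 (X₁ ω, X₂ ω) - X₁ ω * f2 (X₁ ω, X₂ ω)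
      = (φ (X₁ ω) - m σ φ) * h (X₂ ω) := by
    intro ω
    rw [hp1, hf2]
    have := stein_identity hσ hφc hφb (X₁ ω)
    calc σ ^ 2 * (deriv g (X₁ ω) * h (X₂ ω)) - X₁ ω * (g (X₁ ω) * h (X₂ ω))
        = (σ ^ 2 * deriv (sol σ φ) (X₁ ω) - X₁ ω * sol σ φ (X₁ ω)) * h (X₂ ω) := by ring
      _ = (φ (X₁ ω) - m σ φ) * h (X₂ ω) := by rw [this]
  rw [show (fun ω => σ ^ 2 * pderiv1 f2 (X₁ ω, X₂ ω) - X₁ ω * f2 (X₁ ω, X₂ ω))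
      = fun ω => (φ (X₁ ω) - m σ φ) * h (X₂ ω) from funext heq] at h0
  have i1 : Integrable (fun ω => φ (X₁ ω) * h (X₂ ω)) P := by
    refine bounded_integrable (((hφc.measurable).comp hX₁).mul
      ((hh.continuous.measurable).comp hX₂)) (C := Cφ * Ch) fun ω => ?_
    rw [abs_mul]
    exact mul_le_mul (hφb _) (hhb _) (abs_nonneg _) ((abs_nonneg _).trans (hφb 0))
  have i2 : Integrable (fun ω => m σ φ * h (X₂ ω)) P := by
    refine bounded_integrable (measurable_const.mul
      ((hh.continuous.measurable).comp hX₂)) (C := |m σ φ| * Ch) fun ω => ?_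
    rw [abs_mul]
    exact mul_le_mul le_rfl (hhb _) (abs_nonneg _) (abs_nonneg _)
  have hsplit : (fun ω => (φ (X₁ ω) - m σ φ) * h (X₂ ω))
      = fun ω => φ (X₁ ω) * h (X₂ ω) - m σ φ * h (X₂ ω) := by
    funext ω; ring
  rw [hsplit] at h0
  rw [integral_sub i1 i2, integral_const_mul] at h0
  linarith

end Key

/-! ### Smooth cutoffs -/

/-- A smooth decreasing cutoff: `1` on `Iic 0`, `0` on `Ici 1`. -/
noncomputable def sc (x : ℝ) : ℝ := 1 - Real.smoothTransition x

lemma sc_contDiff : ContDiff ℝ 1 sc :=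
  contDiff_const.sub Real.smoothTransition.contDiff

lemma sc_one {x : ℝ} (hx : x ≤ 0) : sc x = 1 := by
  rw [sc, Real.smoothTransition.zero_of_nonpos hx, sub_zero]

lemma sc_zero {x : ℝ} (hx : 1 ≤ x) : sc x = 0 := by
  rw [sc, Real.smoothTransition.one_of_one_le hx, sub_self]

lemma sc_abs_le (x : ℝ) : |sc x| ≤ 1 := by
  rw [abs_le, sc]
  constructor
  · linarith [Real.smoothTransition.le_one x]
  · linarith [Real.smoothTransition.nonneg x]

lemma sc_deriv_bound : ∃ D, 0 ≤ D ∧ ∀ x, |deriv sc x| ≤ D := by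
  obtain ⟨D₀, hD₀⟩ := (isCompact_Icc (a := (0:ℝ)) (b := 1)).exists_bound_of_continuousOn
    ((sc_contDiff.continuous_deriv le_rfl).continuousOn)
  refine ⟨max D₀ 0, le_max_right _ _, fun x => ?_⟩
  rcases lt_or_ge x 0 with hx | hx
  · have hz : deriv sc x = 0 := by
      have hev : sc =ᶠ[nhds x] fun _ => 1 :=
        Filter.eventually_of_mem (Iio_mem_nhds hx) fun y hy => sc_one (le_of_lt hy)
      rw [hev.deriv_eq, deriv_const]
    simp [hz, le_max_iff]
  rcases le_or_gt x 1 with hx1 | hx1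
  · exact le_trans (by simpa [Real.norm_eq_abs] using hD₀ x ⟨hx, hx1⟩) (le_max_left _ _)
  · have hz : deriv sc x = 0 := by
      have hev : sc =ᶠ[nhds x] fun _ => 0 :=
        Filter.eventually_of_mem (Ioi_mem_nhds hx1) fun y hy => sc_zero (le_of_lt hy)
      rw [hev.deriv_eq, deriv_const]
    simp [hz, le_max_iff]

/-- Cutoff approximating the indicator of `Iic a`. -/
noncomputable def cut (a : ℝ) (n : ℕ) (x : ℝ) : ℝ := sc ((n : ℝ) * (x - a))

lemma cut_contDiff (a : ℝ) (n : ℕ) : ContDiff ℝ 1 (cut a n) :=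
  sc_contDiff.comp (contDiff_const.mul (contDiff_id.sub contDiff_const))

lemma cut_cont (a : ℝ) (n : ℕ) : Continuous (cut a n) := (cut_contDiff a n).continuous

lemma cut_abs_le (a : ℝ) (n : ℕ) (x : ℝ) : |cut a n x| ≤ 1 := sc_abs_le _

lemma cut_hasDerivAt (a : ℝ) (n : ℕ) (x : ℝ) :
    HasDerivAt (cut a n) (deriv sc ((n : ℝ) * (x - a)) * n) x := by
  have h1 : HasDerivAt (fun x : ℝ => (n : ℝ) * (x - a)) n x := by
    simpa using ((hasDerivAt_id x).sub_const a).const_mul (n : ℝ)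
  have hs : HasDerivAt sc (deriv sc ((n : ℝ) * (x - a))) ((n : ℝ) * (x - a)) :=
    ((sc_contDiff.differentiable one_ne_zero) _).hasDerivAt
  exact HasDerivAt.comp x hs h1

lemma cut_deriv_bound (a : ℝ) (n : ℕ) {D : ℝ} (hD : 0 ≤ D) (hDb : ∀ x, |deriv sc x| ≤ D) (x : ℝ) :
    |deriv (cut a n) x| ≤ D * n := by
  rw [(cut_hasDerivAt a n x).deriv, abs_mul, Nat.abs_cast]
  exact mul_le_mul_of_nonneg_right (hDb _) (Nat.cast_nonneg n)

lemma cut_tendsto (a x : ℝ) :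
    Filter.Tendsto (fun n : ℕ => cut a n x) Filter.atTop (nhds (Set.indicator (Iic a) 1 x)) := by
  rcases le_or_gt x a with hx | hx
  · have : ∀ n : ℕ, cut a n x = 1 := fun n =>
      sc_one (mul_nonpos_of_nonneg_of_nonpos (Nat.cast_nonneg n) (by linarith))
    rw [indicator_of_mem (mem_Iic.2 hx)]
    simp only [this, Pi.one_apply]
    exact tendsto_const_nhds
  · rw [indicator_of_notMem (by simpa [mem_Iic] using hx)]
    have hpos : 0 < x - a := by linarith
    refine Filter.Tendsto.congr' ?_ tendsto_const_nhds
    filter_upwards [Filter.eventually_ge_atTop ⌈(x - a)⁻¹⌉₊] with n hn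
    refine (sc_zero ?_).symm
    have h1 : (x - a)⁻¹ ≤ (n : ℝ) := le_trans (Nat.le_ceil _) (Nat.cast_le.2 hn)
    rw [inv_le_iff_one_le_mul₀ hpos] at h1
    linarith [h1]

/-! ### Limits and conversions -/

section Final

variable {Ω : Type*} [MeasurableSpace Ω] {P : Measure Ω} [IsProbabilityMeasure P]
  {σ : ℝ} {X₁ X₂ X : Ω → ℝ}

lemma ind_abs_le (t : Set ℝ) (x : ℝ) : |Set.indicator t (1 : ℝ → ℝ) x| ≤ 1 := by
  by_cases h : x ∈ t <;> simp [h]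

lemma integral_ind (hX : Measurable X) (a : ℝ) :
    ∫ ω, Set.indicator (Iic a) (1 : ℝ → ℝ) (X ω) ∂P = (P (X ⁻¹' Iic a)).toReal := by
  have h : (fun ω => Set.indicator (Iic a) (1 : ℝ → ℝ) (X ω))
      = Set.indicator (X ⁻¹' Iic a) (1 : Ω → ℝ) := by
    funext ω
    by_cases h : X ω ≤ a <;> simp [Set.indicator, mem_Iic, h]
  rw [h, integral_indicator_one (hX measurableSet_Iic)]
  rfl

lemma integral_ind_mul (hX₁ : Measurable X₁) (hX₂ : Measurable X₂) (a b : ℝ) :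
    ∫ ω, Set.indicator (Iic a) (1:ℝ→ℝ) (X₁ ω) * Set.indicator (Iic b) (1:ℝ→ℝ) (X₂ ω) ∂P
      = (P (X₁ ⁻¹' Iic a ∩ X₂ ⁻¹' Iic b)).toReal := by
  have h : (fun ω => Set.indicator (Iic a) (1:ℝ→ℝ) (X₁ ω) * Set.indicator (Iic b) (1:ℝ→ℝ) (X₂ ω))
      = Set.indicator (X₁ ⁻¹' Iic a ∩ X₂ ⁻¹' Iic b) (1 : Ω → ℝ) := by
    funext ω
    by_cases h1 : X₁ ω ≤ a <;> by_cases h2 : X₂ ω ≤ b <;>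
      simp [Set.indicator, mem_Iic, h1, h2]
  rw [h, integral_indicator_one ((hX₁ measurableSet_Iic).inter (hX₂ measurableSet_Iic))]
  rfl

lemma tendsto_cut_integral (hX : Measurable X) {g : Ω → ℝ} (hgm : Measurable g)
    (hgb : ∀ ω, |g ω| ≤ 1) (a : ℝ) :
    Filter.Tendsto (fun n : ℕ => ∫ ω, cut a n (X ω) * g ω ∂P) Filter.atTop
      (nhds (∫ ω, Set.indicator (Iic a) (1:ℝ→ℝ) (X ω) * g ω ∂P)) := by
  refine tendsto_integral_of_dominated_convergence (fun _ => 1) ?_ (integrable_const 1) ?_ ?_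
  · intro n
    exact (((cut_cont a n).measurable.comp hX).mul hgm).aestronglyMeasurable
  · intro n
    refine Eventually.of_forall fun ω => ?_
    rw [Real.norm_eq_abs, abs_mul]
    calc |cut a n (X ω)| * |g ω| ≤ 1 * 1 :=
          mul_le_mul (cut_abs_le a n _) (hgb ω) (abs_nonneg _) zero_le_one
      _ = 1 := one_mul 1
  · exact Eventually.of_forall fun ω => (cut_tendsto a (X ω)).mul_const _

lemma tendsto_m_cut (hσ : 0 < σ) (a : ℝ) :
    Filter.Tendsto (fun n : ℕ => m σ (cut a n)) Filter.atTop
      (nhds ((∫ u in Iic a, d σ u) / ∫ u, d σ u)) := by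
  have hnum : Filter.Tendsto (fun n : ℕ => ∫ u, d σ u * cut a n u) Filter.atTop
      (nhds (∫ u in Iic a, d σ u)) := by
    have hlim : (∫ u in Iic a, d σ u) = ∫ u, d σ u * Set.indicator (Iic a) (1:ℝ→ℝ) u := by
      rw [show (fun u => d σ u * Set.indicator (Iic a) (1:ℝ→ℝ) u)
          = Set.indicator (Iic a) (d σ) from by
        funext u; by_cases h : u ∈ Iic a <;> simp [Set.indicator, h]]
      rw [integral_indicator measurableSet_Iic]
    rw [hlim]
    refine tendsto_integral_of_dominated_convergence (d σ) ?_ (d_integrable hσ) ?_ ?_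
    · intro n
      exact ((d_cont σ).mul (cut_cont a n)).aestronglyMeasurable
    · intro n
      refine Eventually.of_forall fun u => ?_
      rw [Real.norm_eq_abs, abs_mul, abs_of_pos (d_pos σ u)]
      calc d σ u * |cut a n u| ≤ d σ u * 1 :=
            mul_le_mul_of_nonneg_left (cut_abs_le a n u) (d_pos σ u).le
        _ = d σ u := mul_one _
    · exact Eventually.of_forall fun u => (cut_tendsto a u).const_mul _
  simpa [m] using hnum.div_const (∫ u, d σ u)

end Final

end SteinAux

open SteinAux

/-- **Two-dimensional Stein lemma, converse direction.**
If `E[|X₁|] < ∞` and `E[σ² ∂₁f(X₁,X₂) − X₁ f(X₁,X₂)] = 0` for every continuously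
differentiable bounded `f : ℝ² → ℝ` with bounded partial derivatives, then
`X₁ ~ N(0, σ²)` and `X₁` is independent of `X₂`. -/
theorem stein_lemma_2d_converse
    {Ω : Type*} [MeasurableSpace Ω] (P : Measure Ω) [IsProbabilityMeasure P]
    (σ : ℝ) (hσ : 0 < σ) (X₁ X₂ : Ω → ℝ) (hX₁ : Measurable X₁) (hX₂ : Measurable X₂)
    (hint : Integrable X₁ P)
    (hstein : ∀ f : ℝ × ℝ → ℝ, ContDiff ℝ 1 f →
      (∃ C, ∀ p, |f p| ≤ C) → (∃ C, ∀ p, |pderiv1 f p| ≤ C) →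
      (∃ C, ∀ p, |pderiv2 f p| ≤ C) →
      ∫ ω, (σ ^ 2 * pderiv1 f (X₁ ω, X₂ ω) - X₁ ω * f (X₁ ω, X₂ ω)) ∂P = 0) :
    Measure.map X₁ P = gaussianReal 0 (Real.toNNReal (σ ^ 2)) ∧ IndepFun X₁ X₂ P := by
  obtain ⟨D, hD0, hDb⟩ := sc_deriv_bound
  set I := ∫ u, d σ u with hI
  have hIpos : 0 < I := d_integral_pos hσ
  -- the key identity specialized to cutoffs
  have hkey : ∀ (a : ℝ) (n : ℕ) (h : ℝ → ℝ) (Ch Ch' : ℝ), ContDiff ℝ 1 h →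
      (∀ x, |h x| ≤ Ch) → (∀ x, |deriv h x| ≤ Ch') →
      ∫ ω, cut a n (X₁ ω) * h (X₂ ω) ∂P = m σ (cut a n) * ∫ ω, h (X₂ ω) ∂P := by
    intro a n h Ch Ch' hh hhb hhb'
    exact key_identity hσ hX₁ hX₂ hstein (cut_cont a n) (cut_abs_le a n) hh hhb hhb'
  -- Step A: h replaced by indicator of Iic b
  have stepA : ∀ (a b : ℝ) (n : ℕ),
      ∫ ω, cut a n (X₁ ω) * Set.indicator (Set.Iic b) (1:ℝ→ℝ) (X₂ ω) ∂P
        = m σ (cut a n) * ∫ ω, Set.indicator (Set.Iic b) (1:ℝ→ℝ) (X₂ ω) ∂P := by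
    intro a b n
    have hXmeas : Measurable fun ω => cut a n (X₁ ω) := (cut_cont a n).measurable.comp hX₁
    have hL : Filter.Tendsto (fun k : ℕ => ∫ ω, cut b k (X₂ ω) * cut a n (X₁ ω) ∂P)
        Filter.atTop (nhds (∫ ω, Set.indicator (Set.Iic b) (1:ℝ→ℝ) (X₂ ω) * cut a n (X₁ ω) ∂P)) :=
      tendsto_cut_integral hX₂ hXmeas (fun ω => cut_abs_le a n _) b
    have hR : Filter.Tendsto (fun k : ℕ => m σ (cut a n) * ∫ ω, cut b k (X₂ ω) * 1 ∂P)
        Filter.atTop (nhds (m σ (cut a n) *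
          ∫ ω, Set.indicator (Set.Iic b) (1:ℝ→ℝ) (X₂ ω) * 1 ∂P)) :=
      (tendsto_cut_integral hX₂ measurable_const (fun ω => by norm_num) b).const_mul _
    have heq : (fun k : ℕ => ∫ ω, cut b k (X₂ ω) * cut a n (X₁ ω) ∂P)
        = fun k : ℕ => m σ (cut a n) * ∫ ω, cut b k (X₂ ω) * 1 ∂P := by
      funext k
      have h1 : ∫ ω, cut b k (X₂ ω) * cut a n (X₁ ω) ∂P
          = ∫ ω, cut a n (X₁ ω) * cut b k (X₂ ω) ∂P := by
        congr 1; funext ω; ring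
      have h2 : ∫ ω, cut b k (X₂ ω) * 1 ∂P = ∫ ω, cut b k (X₂ ω) ∂P := by
        congr 1; funext ω; ring
      rw [h1, h2]
      exact hkey a n (cut b k) 1 (D * k) (cut_contDiff b k) (cut_abs_le b k)
        (cut_deriv_bound b k hD0 hDb)
    rw [heq] at hL
    have := tendsto_nhds_unique hL hR
    calc ∫ ω, cut a n (X₁ ω) * Set.indicator (Set.Iic b) (1:ℝ→ℝ) (X₂ ω) ∂P
        = ∫ ω, Set.indicator (Set.Iic b) (1:ℝ→ℝ) (X₂ ω) * cut a n (X₁ ω) ∂P := by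
          congr 1; funext ω; ring
      _ = m σ (cut a n) * ∫ ω, Set.indicator (Set.Iic b) (1:ℝ→ℝ) (X₂ ω) * 1 ∂P := this
      _ = m σ (cut a n) * ∫ ω, Set.indicator (Set.Iic b) (1:ℝ→ℝ) (X₂ ω) ∂P := by
          congr 2; funext ω; ring
  -- Step B: n → ∞ in Step A
  have rect : ∀ a b : ℝ, (P (X₁ ⁻¹' Set.Iic a ∩ X₂ ⁻¹' Set.Iic b)).toReal
      = ((∫ u in Set.Iic a, d σ u) / I) * (P (X₂ ⁻¹' Set.Iic b)).toReal := by
    intro a b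
    have hgm : Measurable fun ω => Set.indicator (Set.Iic b) (1:ℝ→ℝ) (X₂ ω) :=
      (measurable_one.indicator measurableSet_Iic).comp hX₂
    have hL : Filter.Tendsto
        (fun n : ℕ => ∫ ω, cut a n (X₁ ω) * Set.indicator (Set.Iic b) (1:ℝ→ℝ) (X₂ ω) ∂P)
        Filter.atTop (nhds (∫ ω, Set.indicator (Set.Iic a) (1:ℝ→ℝ) (X₁ ω) *
          Set.indicator (Set.Iic b) (1:ℝ→ℝ) (X₂ ω) ∂P)) :=
      tendsto_cut_integral hX₁ hgm (fun ω => ind_abs_le _ _) a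
    have hR : Filter.Tendsto
        (fun n : ℕ => m σ (cut a n) * ∫ ω, Set.indicator (Set.Iic b) (1:ℝ→ℝ) (X₂ ω) ∂P)
        Filter.atTop (nhds (((∫ u in Set.Iic a, d σ u) / I) *
          ∫ ω, Set.indicator (Set.Iic b) (1:ℝ→ℝ) (X₂ ω) ∂P)) :=
      (tendsto_m_cut hσ a).mul_const _
    rw [show (fun n : ℕ => ∫ ω, cut a n (X₁ ω) * Set.indicator (Set.Iic b) (1:ℝ→ℝ) (X₂ ω) ∂P)
        = fun n : ℕ => m σ (cut a n) * ∫ ω, Set.indicator (Set.Iic b) (1:ℝ→ℝ) (X₂ ω) ∂P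
        from funext fun n => stepA a b n] at hL
    have h := tendsto_nhds_unique hL hR
    rw [integral_ind_mul hX₁ hX₂ a b, integral_ind hX₂ b] at h
    exact h
  -- single variable version
  have single : ∀ a : ℝ, (P (X₁ ⁻¹' Set.Iic a)).toReal = (∫ u in Set.Iic a, d σ u) / I := by
    intro a
    have hone : ∀ n : ℕ, ∫ ω, cut a n (X₁ ω) * (1:ℝ) ∂P = m σ (cut a n) * ∫ ω, (1:ℝ) ∂P := by
      intro n
      exact hkey a n (fun _ => 1) 1 1 contDiff_const (fun x => by norm_num)
        (fun x => by simp)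
    have hL : Filter.Tendsto (fun n : ℕ => ∫ ω, cut a n (X₁ ω) * (1:ℝ) ∂P)
        Filter.atTop (nhds (∫ ω, Set.indicator (Set.Iic a) (1:ℝ→ℝ) (X₁ ω) * 1 ∂P)) :=
      tendsto_cut_integral hX₁ measurable_const (fun ω => by norm_num) a
    have hR : Filter.Tendsto (fun n : ℕ => m σ (cut a n) * ∫ ω, (1:ℝ) ∂P)
        Filter.atTop (nhds ((∫ u in Set.Iic a, d σ u) / I * ∫ ω, (1:ℝ) ∂P)) :=
      (tendsto_m_cut hσ a).mul_const _
    rw [show (fun n : ℕ => ∫ ω, cut a n (X₁ ω) * (1:ℝ) ∂P)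
        = fun n : ℕ => m σ (cut a n) * ∫ ω, (1:ℝ) ∂P from funext hone] at hL
    have h := tendsto_nhds_unique hL hR
    have h1 : ∫ ω, (1:ℝ) ∂P = 1 := by simp
    rw [h1, mul_one] at h
    have h2 : ∫ ω, Set.indicator (Set.Iic a) (1:ℝ→ℝ) (X₁ ω) * 1 ∂P
        = ∫ ω, Set.indicator (Set.Iic a) (1:ℝ→ℝ) (X₁ ω) ∂P := by
      congr 1; funext ω; ring
    rw [h2, integral_ind hX₁ a] at h
    exact h
  -- Goal 1 : the law of X₁
  have hv : Real.toNNReal (σ ^ 2) ≠ 0 := by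
    simp only [ne_eq, Real.toNNReal_eq_zero, not_le]
    positivity
  have goal1 : Measure.map X₁ P = gaussianReal 0 (Real.toNNReal (σ ^ 2)) := by
    haveI := Measure.isProbabilityMeasure_map (μ := P) hX₁.aemeasurable
    refine Measure.ext_of_Iic (Measure.map X₁ P) _ fun a => ?_
    rw [Measure.map_apply hX₁ measurableSet_Iic]
    have hpdf : ∀ x : ℝ, gaussianPDFReal 0 (Real.toNNReal (σ ^ 2)) x = d σ x / I := by
      intro x
      rw [gaussianPDFReal, Real.coe_toNNReal _ (sq_nonneg σ), hI, d_integral hσ, sub_zero, d]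
      ring
    have hInt : IntegrableOn (gaussianPDFReal 0 (Real.toNNReal (σ ^ 2))) (Set.Iic a) :=
      (integrable_gaussianPDFReal _ _).integrableOn
    have hcalc : gaussianReal 0 (Real.toNNReal (σ ^ 2)) (Set.Iic a)
        = ENNReal.ofReal (∫ x in Set.Iic a, gaussianPDFReal 0 (Real.toNNReal (σ ^ 2)) x) := by
      rw [gaussianReal_apply _ hv _, gaussianPDF_def]
      rw [ofReal_integral_eq_lintegral_ofReal hInt
        (Eventually.of_forall fun x => gaussianPDFReal_nonneg _ _ x)]
    rw [hcalc]
    have hval : ∫ x in Set.Iic a, gaussianPDFReal 0 (Real.toNNReal (σ ^ 2)) x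
        = (∫ u in Set.Iic a, d σ u) / I := by
      rw [show (fun x => gaussianPDFReal 0 (Real.toNNReal (σ ^ 2)) x)
          = fun x => I⁻¹ * d σ x from funext fun x => by rw [hpdf x, div_eq_inv_mul]]
      rw [integral_const_mul, div_eq_inv_mul]
    rw [hval, ← single a]
    exact (ENNReal.ofReal_toReal (measure_ne_top P _)).symm
  refine ⟨goal1, ?_⟩
  -- Goal 2 : independence
  rw [ProbabilityTheory.indepFun_iff_map_prod_eq_prod_map_map hX₁.aemeasurable hX₂.aemeasurable]
  haveI := Measure.isProbabilityMeasure_map (μ := P) (hX₁.prodMk hX₂).aemeasurable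
  haveI := Measure.isProbabilityMeasure_map (μ := P) hX₁.aemeasurable
  haveI := Measure.isProbabilityMeasure_map (μ := P) hX₂.aemeasurable
  have hspan : IsCountablySpanning (Set.range (Set.Iic : ℝ → Set ℝ)) := by
    refine ⟨fun n => Set.Iic n, fun n => Set.mem_range_self _, ?_⟩
    ext x
    simp only [Set.mem_iUnion, Set.mem_Iic, Set.mem_univ, iff_true]
    obtain ⟨n, hn⟩ := exists_nat_ge x
    exact ⟨n, hn⟩
  have h1 : (inferInstance : MeasurableSpace ℝ)
      = MeasurableSpace.generateFrom (Set.range (Set.Iic : ℝ → Set ℝ)) :=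
    BorelSpace.measurable_eq.trans (borel_eq_generateFrom_Iic ℝ)
  have hgen : (inferInstance : MeasurableSpace (ℝ × ℝ)) = MeasurableSpace.generateFrom
      (Set.image2 (· ×ˢ ·) (Set.range (Set.Iic : ℝ → Set ℝ)) (Set.range (Set.Iic : ℝ → Set ℝ))) := by
    rw [show (inferInstance : MeasurableSpace (ℝ × ℝ))
        = @Prod.instMeasurableSpace ℝ ℝ inferInstance inferInstance from rfl, h1]
    exact generateFrom_prod_eq hspan hspan
  have hpi : IsPiSystem (Set.image2 (· ×ˢ ·) (Set.range (Set.Iic : ℝ → Set ℝ))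
      (Set.range (Set.Iic : ℝ → Set ℝ))) := by
    rintro s ⟨s1, ⟨a, rfl⟩, s2, ⟨b, rfl⟩, rfl⟩ t ⟨t1, ⟨c, rfl⟩, t2, ⟨e, rfl⟩, rfl⟩ -
    rw [Set.prod_inter_prod, Set.Iic_inter_Iic, Set.Iic_inter_Iic]
    exact Set.mem_image2_of_mem (Set.mem_range_self _) (Set.mem_range_self _)
  refine ext_of_generate_finite _ hgen hpi ?_ (by simp)
  rintro s ⟨s1, ⟨a, rfl⟩, s2, ⟨b, rfl⟩, rfl⟩
  rw [Measure.map_apply (hX₁.prodMk hX₂) (measurableSet_Iic.prod measurableSet_Iic),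
    Measure.prod_prod, Measure.map_apply hX₁ measurableSet_Iic,
    Measure.map_apply hX₂ measurableSet_Iic, Set.mk_preimage_prod]
  refine (ENNReal.toReal_eq_toReal_iff' (measure_ne_top _ _)
    (ENNReal.mul_ne_top (measure_ne_top _ _) (measure_ne_top _ _))).mp ?_
  rw [ENNReal.toReal_mul, rect a b, single a]
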